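/- Define P_c : A_m → A_m by P_c(w) = w + q_{Λ(Z(w)−1)(c)}, where Λ is the cyclically equivariant layer-1 Latin table (Λ(S+k)(a+k) = Λ(S)(a)+k). Then for every c ∈ Z/5, P_c ∘ ρ_c = T_{q_{4+c}} ∘ ρ_c ∘ P_0, where ρ_c is the coordinate rotation (ρ_c w)_j = w_{j−c} and T_v(w) = w + v. In particular P_c is a bijection whenever P_0 is. -/

import Mathlib

/-- `q_i = e_i − e_4` (so `q_4 = 0`). -/
def qVec (m : ℕ) (i : Fin 5) : Fin 5 → ZMod m :=
  fun j => (if j = i then 1 else 0) - (if j = (4 : Fin 5) then 1 else 0)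

/-- Zero-set `Z(w) = {i : w_i = 0}`. -/
def zeroSet {m : ℕ} (w : Fin 5 → ZMod m) : Finset (Fin 5) :=
  Finset.univ.filter (fun i => w i = 0)

/-- The coordinate rotation `(ρ_c w)_j = w_{j−c}` (indices mod 5). -/
def rot (m : ℕ) (c : Fin 5) (w : Fin 5 → ZMod m) : Fin 5 → ZMod m :=
  fun j => w (j - c)

/-- The non-constant layer map of color `c`: `P_c(w) = w + q_{Λ(Z(w)−1)(c)}`. -/
def layerP (m : ℕ) (Λ : Finset (Fin 5) → Fin 5 → Fin 5) (c : Fin 5)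
    (w : Fin 5 → ZMod m) : Fin 5 → ZMod m :=
  w + qVec m (Λ ((zeroSet w).image (· - (1 : Fin 5))) c)

lemma qVec_sum (m : ℕ) (i : Fin 5) : ∑ j, qVec m i j = 0 := by
  simp [qVec, Finset.sum_sub_distrib]

lemma rot_rot (m : ℕ) (c : Fin 5) (w : Fin 5 → ZMod m) :
    rot m c (rot m (-c) w) = w := by
  funext j; simp [rot]

lemma rot_rot' (m : ℕ) (c : Fin 5) (w : Fin 5 → ZMod m) :
    rot m (-c) (rot m c w) = w := by
  funext j; simp [rot]

lemma rot_sum (m : ℕ) (c : Fin 5) (w : Fin 5 → ZMod m) :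
    ∑ j, rot m c w j = ∑ j, w j := by
  simpa [rot] using Equiv.sum_comp (Equiv.subRight c) w

lemma zeroSet_rot (m : ℕ) (c : Fin 5) (w : Fin 5 → ZMod m) :
    zeroSet (rot m c w) = (zeroSet w).image (· + c) := by
  ext j
  simp only [zeroSet, rot, Finset.mem_filter, Finset.mem_filter_univ, Finset.mem_image, Finset.mem_univ, true_and]
  constructor
  · intro h; exact ⟨j - c, (Finset.mem_filter.mp h).2, sub_add_cancel j c⟩
  · rintro ⟨a, ha, rfl⟩; exact Finset.mem_filter.mpr ⟨Finset.mem_univ _, by simpa using ha⟩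

lemma key (m : ℕ) (Λ : Finset (Fin 5) → Fin 5 → Fin 5)
    (hequiv : ∀ (S : Finset (Fin 5)) (k a : Fin 5),
      Λ (S.image (· + k)) (a + k) = Λ S a + k)
    (c : Fin 5) (w : Fin 5 → ZMod m) :
    layerP m Λ c (rot m c w) = rot m c (layerP m Λ 0 w) + qVec m (4 + c) := by
  have hz : (zeroSet (rot m c w)).image (· - (1 : Fin 5))
      = ((zeroSet w).image (· - (1 : Fin 5))).image (· + c) := by
    rw [zeroSet_rot, Finset.image_image, Finset.image_image]
    congr 1; funext a; show a + c - 1 = a - 1 + c; abel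
  have hΛ := hequiv ((zeroSet w).image (· - (1 : Fin 5))) c 0
  simp only [zero_add] at hΛ
  funext j
  simp only [layerP, hz, hΛ, Pi.add_apply, rot, qVec]
  have e1 : (j - c = Λ ((zeroSet w).image (· - (1 : Fin 5))) 0)
      ↔ j = Λ ((zeroSet w).image (· - (1 : Fin 5))) 0 + c := sub_eq_iff_eq_add
  have e2 : (j - c = (4 : Fin 5)) ↔ j = 4 + c := by rw [sub_eq_iff_eq_add, add_comm]
  rw [if_congr e1 rfl rfl, if_congr e2 rfl rfl]
  ring

/-- **Affine color equivariance.** For the cyclically equivariant layer-1 Latin table `Λ`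
(with the representative rows of the paper), `P_c ∘ ρ_c = T_{q_{4+c}} ∘ ρ_c ∘ P_0` on the
root flat; in particular `P_c` is a bijection of `A_m` whenever `P_0` is. -/
theorem color_equivariance (m : ℕ)
    (Λ : Finset (Fin 5) → Fin 5 → Fin 5)
    (hequiv : ∀ (S : Finset (Fin 5)) (k a : Fin 5),
      Λ (S.image (· + k)) (a + k) = Λ S a + k)
    (h0 : Λ ∅ = ![0, 1, 2, 3, 4])
    (h1 : Λ {0} = ![0, 1, 3, 2, 4])
    (h2 : Λ {0, 1} = ![4, 1, 3, 2, 0])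
    (h3 : Λ {0, 2} = ![4, 1, 3, 0, 2])
    (h4 : Λ {0, 1, 2} = ![1, 0, 3, 4, 2])
    (h5 : Λ {0, 1, 3} = ![4, 3, 0, 2, 1])
    (h6 : Λ Finset.univ = ![0, 1, 2, 3, 4]) :
    ∀ c : Fin 5,
      (∀ w : Fin 5 → ZMod m, (∑ i, w i) = 0 →
        layerP m Λ c (rot m c w) = rot m c (layerP m Λ 0 w) + qVec m (4 + c)) ∧
      (Set.BijOn (layerP m Λ 0) {w : Fin 5 → ZMod m | ∑ i, w i = 0}
          {w : Fin 5 → ZMod m | ∑ i, w i = 0} →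
        Set.BijOn (layerP m Λ c) {w : Fin 5 → ZMod m | ∑ i, w i = 0}
          {w : Fin 5 → ZMod m | ∑ i, w i = 0}) := by
  intro c
  set A : Set (Fin 5 → ZMod m) := {w | ∑ i, w i = 0} with hA
  have rot_bij : ∀ c' : Fin 5, Set.BijOn (rot m c') A A := by
    intro c'
    have hmaps : ∀ d : Fin 5, Set.MapsTo (rot m d) A A := by
      intro d w hw
      simp only [hA, Set.mem_setOf_eq] at *
      rw [rot_sum]; exact hw
    refine ⟨hmaps c', ?_, ?_⟩
    · intro x _ y _ h
      have := congrArg (rot m (-c')) h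
      rwa [rot_rot', rot_rot'] at this
    · intro v hv
      exact ⟨rot m (-c') v, hmaps (-c') hv, rot_rot m c' v⟩
  have add_bij : ∀ v : Fin 5 → ZMod m, (∑ j, v j) = 0 →
      Set.BijOn (· + v) A A := by
    intro v hv
    refine ⟨?_, ?_, ?_⟩
    · intro w hw
      simp only [hA, Set.mem_setOf_eq] at *
      simp [Finset.sum_add_distrib, hw, hv]
    · intro x _ y _ h
      exact add_left_injective v h
    · intro w hw
      refine ⟨w - v, ?_, by simp⟩
      simp only [hA, Set.mem_setOf_eq] at *
      simp [Finset.sum_sub_distrib, hw, hv]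
  constructor
  · intro w _; exact key m Λ hequiv c w
  · intro hP0
    have heq : layerP m Λ c
        = (· + qVec m (4 + c)) ∘ (rot m c ∘ (layerP m Λ 0 ∘ rot m (-c))) := by
      funext v
      have := key m Λ hequiv c (rot m (-c) v)
      rw [rot_rot] at this
      simpa [Function.comp] using this
    rw [heq]
    exact (add_bij _ (qVec_sum m (4 + c))).comp ((rot_bij c).comp (hP0.comp (rot_bij (-c))))
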